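/- Let n ≥ 1. Let s : ℝ → ℝ satisfy: 0 < s(a) ≤ 1 for every a > 0, s is antitone on (0,∞), and a ↦ log s(a) is convex on (0,∞). Let p : Fin n → ℝ with 0 < p i < 1 for all i, and let α, β : Fin n → ℝ with α i > 0 and β i > 0, satisfying the similar-ordering conditions (p i − p j)·(α i − α j) ≤ 0 and (p i − p j)·(β i − β j) ≤ 0 for all i, j. If α is weakly supermajorized by β, i.e. for every k = 1,…,n the sum of the k smallest entries of α is at most the sum of the k smallest entries of β, then ∏_{i=1}^n p i · s(α i) ≥ ∏_{i=1}^n p i · s(β i). -/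

import Mathlib

open Finset

/-- Sum of the `k` smallest entries of the tuple `a`. -/
noncomputable def kSmallestSum {n : ℕ} (a : Fin n → ℝ) (k : ℕ) : ℝ :=
  ∑ i ∈ Finset.univ.filter (fun i : Fin n => (i : ℕ) < k), a (Tuple.sort a i)

/-- Supremum of left slopes of `f` at `y` (over base points in `(0, y)`). -/
noncomputable def leftSlopeSup (f : ℝ → ℝ) (y : ℝ) : ℝ :=
  sSup ((fun x => (f x - f y) / (x - y)) '' Set.Ioo 0 y)

lemma leftSlope_nonempty {f : ℝ → ℝ} {y : ℝ} (hy : 0 < y) :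
    ((fun x => (f x - f y) / (x - y)) '' Set.Ioo 0 y).Nonempty :=
  ⟨_, ⟨y / 2, ⟨by linarith, by linarith⟩, rfl⟩⟩

lemma leftSlope_bddAbove {f : ℝ → ℝ} (hf : ConvexOn ℝ (Set.Ioi 0) f) {y : ℝ} (hy : 0 < y) :
    BddAbove ((fun x => (f x - f y) / (x - y)) '' Set.Ioo 0 y) := by
  refine ⟨(f (y + 1) - f y) / (y + 1 - y), ?_⟩
  rintro m ⟨x, hx, rfl⟩
  exact hf.secant_mono (Set.mem_Ioi.mpr hy) (Set.mem_Ioi.mpr hx.1)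
    (Set.mem_Ioi.mpr (by linarith)) (ne_of_lt hx.2) (by norm_num) (by linarith [hx.2])

/-- Subgradient inequality: the left-slope sup is a subgradient. -/
lemma leftSlopeSup_subgrad {f : ℝ → ℝ} (hf : ConvexOn ℝ (Set.Ioi 0) f)
    {y t : ℝ} (hy : 0 < y) (ht : 0 < t) :
    leftSlopeSup f y * (t - y) ≤ f t - f y := by
  rcases lt_trichotomy t y with h | rfl | h
  · have hmem : (f t - f y) / (t - y) ∈
        (fun x => (f x - f y) / (x - y)) '' Set.Ioo 0 y := ⟨t, ⟨ht, h⟩, rfl⟩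
    have hle : (f t - f y) / (t - y) ≤ leftSlopeSup f y :=
      le_csSup (leftSlope_bddAbove hf hy) hmem
    have hty : t - y < 0 := by linarith
    have := mul_le_mul_of_nonpos_right hle (le_of_lt hty)
    rwa [div_mul_cancel₀ _ (ne_of_lt hty)] at this
  · simp
  · have hle : leftSlopeSup f y ≤ (f t - f y) / (t - y) := by
      apply csSup_le (leftSlope_nonempty hy)
      rintro m ⟨x, hx, rfl⟩
      exact hf.secant_mono (Set.mem_Ioi.mpr hy) (Set.mem_Ioi.mpr hx.1)
        (Set.mem_Ioi.mpr ht) (ne_of_lt hx.2) (ne_of_gt h) (by linarith [hx.2])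
    have hty : 0 < t - y := by linarith
    have := mul_le_mul_of_nonneg_right hle (le_of_lt hty)
    rwa [div_mul_cancel₀ _ (ne_of_gt hty)] at this

/-- Monotonicity of the left-slope sup. -/
lemma leftSlopeSup_mono {f : ℝ → ℝ} (hf : ConvexOn ℝ (Set.Ioi 0) f)
    {y z : ℝ} (hy : 0 < y) (hyz : y ≤ z) :
    leftSlopeSup f y ≤ leftSlopeSup f z := by
  rcases eq_or_lt_of_le hyz with rfl | hlt
  · exact le_rfl
  have hz : 0 < z := lt_trans hy hlt
  apply csSup_le (leftSlope_nonempty hy)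
  rintro m ⟨x, hx, rfl⟩
  have h1 : (f x - f y) / (x - y) = (f y - f x) / (y - x) := by
    rw [← neg_div_neg_eq]; congr 1 <;> ring
  have h2 : (f y - f x) / (y - x) ≤ (f z - f y) / (z - y) :=
    hf.slope_mono_adjacent (Set.mem_Ioi.mpr hx.1) (Set.mem_Ioi.mpr hz) hx.2 hlt
  have h3 : (f z - f y) / (z - y) = (f y - f z) / (y - z) := by
    rw [← neg_div_neg_eq]; congr 1 <;> ring
  have hmem : (f y - f z) / (y - z) ∈
      (fun x => (f x - f z) / (x - z)) '' Set.Ioo 0 z := ⟨y, ⟨hy, hlt⟩, rfl⟩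
  calc (f x - f y) / (x - y) ≤ (f y - f z) / (y - z) := by rw [h1, ← h3]; exact h2
    _ ≤ leftSlopeSup f z := le_csSup (leftSlope_bddAbove hf hz) hmem

/-- Nonpositivity of the left-slope sup for antitone functions. -/
lemma leftSlopeSup_nonpos {f : ℝ → ℝ} (hanti : AntitoneOn f (Set.Ioi 0))
    {y : ℝ} (hy : 0 < y) : leftSlopeSup f y ≤ 0 := by
  apply csSup_le (leftSlope_nonempty hy)
  rintro m ⟨x, hx, rfl⟩
  have h1 : f y ≤ f x := hanti (Set.mem_Ioi.mpr hx.1) (Set.mem_Ioi.mpr hy) (le_of_lt hx.2)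
  have h2 : x - y < 0 := by linarith [hx.2]
  exact div_nonpos_iff.mpr (Or.inl ⟨by linarith, le_of_lt h2⟩)

/-- Abel-summation positivity lemma. -/
lemma abel_nonneg (n : ℕ) (g d : ℕ → ℝ)
    (hmono : ∀ i j, i ≤ j → j < n → g i ≤ g j)
    (hneg : ∀ i, i < n → g i ≤ 0)
    (hsum : ∀ k, k ≤ n → ∑ i ∈ Finset.range k, d i ≤ 0) :
    0 ≤ ∑ i ∈ Finset.range n, g i * d i := by
  induction n generalizing g with
  | zero => simp
  | succ m ih =>
    have key : ∑ i ∈ Finset.range (m + 1), g i * d i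
        = (∑ i ∈ Finset.range m, (g i - g m) * d i)
          + g m * ∑ i ∈ Finset.range (m + 1), d i := by
      have h1 : ∑ i ∈ Finset.range m, (g i - g m) * d i
          = ∑ i ∈ Finset.range (m + 1), (g i - g m) * d i := by
        rw [Finset.sum_range_succ, sub_self, zero_mul, add_zero]
      rw [h1, Finset.mul_sum, ← Finset.sum_add_distrib]
      exact Finset.sum_congr rfl (fun i _ => by ring)
    rw [key]
    have t1 : 0 ≤ ∑ i ∈ Finset.range m, (g i - g m) * d i := by
      apply ih (fun i => g i - g m)
      · intro i j hij hj
        have := hmono i j hij (Nat.lt_succ_of_lt hj); linarith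
      · intro i hi
        have := hmono i m (Nat.le_of_lt hi) (Nat.lt_succ_self m); linarith
      · intro k hk; exact hsum k (Nat.le_succ_of_le hk)
    have t2 : 0 ≤ g m * ∑ i ∈ Finset.range (m + 1), d i := by
      nlinarith [hneg m (Nat.lt_succ_self m), hsum (m + 1) le_rfl]
    linarith

/-- Bridge between sums over `Fin n` filtered by `(· < k)` and sums over `range k`. -/
lemma sum_filter_eq_sum_range {n : ℕ} (d : Fin n → ℝ) {k : ℕ} (hk : k ≤ n) :
    ∑ i ∈ Finset.univ.filter (fun i : Fin n => (i : ℕ) < k), d i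
      = ∑ j ∈ Finset.range k, (if h : j < n then d ⟨j, h⟩ else 0) := by
  have h2 : ∑ j ∈ Finset.range n,
        (fun j : ℕ => if j < k then (if h : j < n then d ⟨j, h⟩ else 0) else 0) j
      = ∑ i ∈ Finset.univ.filter (fun i : Fin n => (i : ℕ) < k), d i := by
    rw [← Fin.sum_univ_eq_sum_range, Finset.sum_filter]
    apply Finset.sum_congr rfl
    intro i _
    simp [i.isLt]
  have h3 : (Finset.range n).filter (fun j => j < k) = Finset.range k := by
    ext j
    simp only [Finset.mem_filter, Finset.mem_range]
    omega
  rw [← h2, ← h3, Finset.sum_filter]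

/-- Theorem 3.1: common occurrence probabilities, smallest claim amounts,
usual stochastic order under weak supermajorization of the severity parameters. -/
theorem stmt_0 {n : ℕ} (hn : 1 ≤ n) (s : ℝ → ℝ)
    (hs_pos : ∀ a > 0, 0 < s a) (hs_le : ∀ a > 0, s a ≤ 1)
    (hs_anti : AntitoneOn s (Set.Ioi 0))
    (hs_logconv : ConvexOn ℝ (Set.Ioi 0) (fun a => Real.log (s a)))
    (p α β : Fin n → ℝ)
    (hp : ∀ i, 0 < p i ∧ p i < 1)
    (hα : ∀ i, 0 < α i) (hβ : ∀ i, 0 < β i)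
    (hsimα : ∀ i j, (p i - p j) * (α i - α j) ≤ 0)
    (hsimβ : ∀ i j, (p i - p j) * (β i - β j) ≤ 0)
    (hmaj : ∀ k, 1 ≤ k → k ≤ n → kSmallestSum α k ≤ kSmallestSum β k) :
    ∏ i, p i * s (β i) ≤ ∏ i, p i * s (α i) := by
  set f : ℝ → ℝ := fun x => Real.log (s x) with hf_def
  have hf_anti : AntitoneOn f (Set.Ioi 0) := by
    intro x hx y hy hxy
    exact (Real.log_le_log_iff (hs_pos y hy) (hs_pos x hx)).mpr (hs_anti hx hy hxy)
  -- sorted versions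
  set σ : Equiv.Perm (Fin n) := Tuple.sort α with hσ
  set τ : Equiv.Perm (Fin n) := Tuple.sort β with hτ
  set a : Fin n → ℝ := fun i => α (σ i) with ha_def
  set b : Fin n → ℝ := fun i => β (τ i) with hb_def
  have ha_mono : Monotone a := Tuple.monotone_sort α
  have hb_mono : Monotone b := Tuple.monotone_sort β
  have ha_pos : ∀ i, 0 < a i := fun i => hα _
  have hb_pos : ∀ i, 0 < b i := fun i => hβ _
  -- subgradients at the sorted β values
  set g : Fin n → ℝ := fun i => leftSlopeSup f (b i) with hg_def
  -- ℕ-indexed versions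
  set G : ℕ → ℝ := fun j => if h : j < n then g ⟨j, h⟩ else 0 with hG_def
  set D : ℕ → ℝ := fun j => if h : j < n then a ⟨j, h⟩ - b ⟨j, h⟩ else 0 with hD_def
  have habel : 0 ≤ ∑ j ∈ Finset.range n, G j * D j := by
    apply abel_nonneg
    · intro i j hij hj
      have hi : i < n := lt_of_le_of_lt hij hj
      simp only [hG_def, dif_pos hi, dif_pos hj]
      exact leftSlopeSup_mono hs_logconv (hb_pos ⟨i, hi⟩)
        (hb_mono (by exact Fin.mk_le_mk.mpr hij))
    · intro i hi
      simp only [hG_def, dif_pos hi]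
      exact leftSlopeSup_nonpos hf_anti (hb_pos ⟨i, hi⟩)
    · intro k hk
      have hsplit : ∑ j ∈ Finset.range k, D j
          = (∑ j ∈ Finset.range k, (fun j => if h : j < n then a ⟨j, h⟩ else 0) j)
            - ∑ j ∈ Finset.range k, (fun j => if h : j < n then b ⟨j, h⟩ else 0) j := by
        rw [← Finset.sum_sub_distrib]
        apply Finset.sum_congr rfl
        intro j hj
        have hjn : j < n := lt_of_lt_of_le (Finset.mem_range.mp hj) hk
        simp [hD_def, dif_pos hjn]
      rw [hsplit, ← sum_filter_eq_sum_range a hk, ← sum_filter_eq_sum_range b hk]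
      have hae : ∑ i ∈ Finset.univ.filter (fun i : Fin n => (i : ℕ) < k), a i
          = kSmallestSum α k := rfl
      have hbe : ∑ i ∈ Finset.univ.filter (fun i : Fin n => (i : ℕ) < k), b i
          = kSmallestSum β k := rfl
      rw [hae, hbe]
      rcases Nat.eq_zero_or_pos k with rfl | hk1
      · simp [kSmallestSum]
      · linarith [hmaj k hk1 hk]
  -- transfer to Fin n sums
  have hGD : ∑ j ∈ Finset.range n, G j * D j = ∑ i : Fin n, g i * (a i - b i) := by
    rw [← Fin.sum_univ_eq_sum_range (fun j => G j * D j) n]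
    apply Finset.sum_congr rfl
    intro i _
    simp [hG_def, hD_def, i.isLt]
  -- subgradient inequality pointwise
  have hsub : ∀ i : Fin n, g i * (a i - b i) ≤ f (a i) - f (b i) := fun i =>
    leftSlopeSup_subgrad hs_logconv (hb_pos i) (ha_pos i)
  have hsum_fb_fa : ∑ i : Fin n, f (b i) ≤ ∑ i : Fin n, f (a i) := by
    have h1 : 0 ≤ ∑ i : Fin n, g i * (a i - b i) := hGD ▸ habel
    have h2 : ∑ i : Fin n, g i * (a i - b i)
        ≤ ∑ i : Fin n, (f (a i) - f (b i)) := Finset.sum_le_sum (fun i _ => hsub i)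
    rw [Finset.sum_sub_distrib] at h2
    linarith
  -- unsort
  have hsa : ∑ i : Fin n, f (a i) = ∑ i : Fin n, f (α i) :=
    Equiv.sum_comp σ (fun j => f (α j))
  have hsb : ∑ i : Fin n, f (b i) = ∑ i : Fin n, f (β i) :=
    Equiv.sum_comp τ (fun j => f (β j))
  have hlog : ∑ i : Fin n, f (β i) ≤ ∑ i : Fin n, f (α i) := by
    rw [← hsa, ← hsb]; exact hsum_fb_fa
  -- from log sums to products
  have hprodβ_pos : 0 < ∏ i : Fin n, s (β i) :=
    Finset.prod_pos (fun i _ => hs_pos _ (hβ i))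
  have hprodα_pos : 0 < ∏ i : Fin n, s (α i) :=
    Finset.prod_pos (fun i _ => hs_pos _ (hα i))
  have hlogβ : Real.log (∏ i : Fin n, s (β i)) = ∑ i : Fin n, f (β i) :=
    Real.log_prod (fun i _ => (hs_pos _ (hβ i)).ne')
  have hlogα : Real.log (∏ i : Fin n, s (α i)) = ∑ i : Fin n, f (α i) :=
    Real.log_prod (fun i _ => (hs_pos _ (hα i)).ne')
  have hprod : ∏ i : Fin n, s (β i) ≤ ∏ i : Fin n, s (α i) := by
    rw [← Real.log_le_log_iff hprodβ_pos hprodα_pos, hlogβ, hlogα]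
    exact hlog
  calc ∏ i, p i * s (β i) = (∏ i, p i) * ∏ i, s (β i) := Finset.prod_mul_distrib
    _ ≤ (∏ i, p i) * ∏ i, s (α i) := by
        apply mul_le_mul_of_nonneg_left hprod
        exact le_of_lt (Finset.prod_pos (fun i _ => (hp i).1))
    _ = ∏ i, p i * s (α i) := Finset.prod_mul_distrib.symm
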